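/- Let α = log_4(8/3) and let β : ℕ → ℝ be given by β_d = (1/2)·log_4(3/2) for d ≥ 3 and β_d = 0 for d ≤ 2. For every integer D ≥ 4 and every finite list d = (d_1, …, d_f) of integers with 0 ≤ f ≤ D and d_i ≥ 3 for all i, it holds that 4^{−Δ2(D,d)} ≤ (3/8)^{1/2} · (3/2)^{(1−f)/2}. -/
import Mathlib


/-- The simple-analysis parameter function `β`:
`β_d = (1/2)·log_4(3/2)` for `d ≥ 3` and `β_d = 0` for `d ≤ 2`. -/
noncomputable def simpleBeta : ℕ → ℝ := fun d =>
  if 3 ≤ d then (1 / 2) * Real.logb 4 (3 / 2) else 0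

/-- `Δ1(D, d) = 1 − f·α/D + Σ_{i=1}^f (β_{d_i} − β_{d_i−1})` where `f` is the
length of the list `d`. -/
noncomputable def Delta1 (α : ℝ) (β : ℕ → ℝ) (D : ℕ) (d : List ℕ) : ℝ :=
  1 - (d.length : ℝ) * α / D + (d.map (fun x => β x - β (x - 1))).sum

/-- `Δ2(D, d) = α − 2α/D + Σ_{i=1}^f β_{d_i} − β_{d'}` where
`d' = D + Σ_{i=1}^f (d_i − 2)`. -/
noncomputable def Delta2 (α : ℝ) (β : ℕ → ℝ) (D : ℕ) (d : List ℕ) : ℝ :=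
  α - 2 * α / D + (d.map β).sum - β (D + (d.map (fun x => x - 2)).sum)

/-- With `α = log_4(8/3)` and the simple-analysis `β`, for every
`D ≥ 4` and every list `d` with `f ≤ D` and `d_i ≥ 3` for all `i`,
`4^{−Δ2(D,d)} ≤ (3/8)^{1/2} · (3/2)^{(1−f)/2}`. -/
theorem stmt16 (D : ℕ) (hD : 4 ≤ D) (d : List ℕ)
    (hf : d.length ≤ D) (hd : ∀ x ∈ d, 3 ≤ x) :
    (4 : ℝ) ^ (-(Delta2 (Real.logb 4 (8 / 3)) simpleBeta D d))
      ≤ (3 / 8 : ℝ) ^ ((1 : ℝ) / 2)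
        * (3 / 2 : ℝ) ^ (((1 : ℝ) - (d.length : ℝ)) / 2) := by
  set α := Real.logb 4 (8 / 3) with hα
  set L := Real.logb 4 (3 / 2) with hL
  set c : ℝ := (1 / 2) * L with hc
  have key : ∀ l : List ℕ, (∀ x ∈ l, 3 ≤ x) → (l.map simpleBeta).sum = (l.length : ℝ) * c := by
    intro l hl
    induction l with
    | nil => simp
    | cons a t ih =>
      have ha : simpleBeta a = c := by
        simp only [simpleBeta]
        rw [if_pos (hl a (by simp)), hc, hL]
      simp only [List.map_cons, List.sum_cons, List.length_cons, ha,
        ih (fun x hx => hl x (by simp [hx]))]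
      push_cast; ring
  have hsum := key d hd
  have hβ' : simpleBeta (D + (d.map (fun x => x - 2)).sum) = c := by
    simp only [simpleBeta]
    rw [if_pos (le_trans (by norm_num : 3 ≤ 4) (le_trans hD (Nat.le_add_right _ _))), hc, hL]
  have hD2 : Delta2 α simpleBeta D d = α - 2 * α / D + (d.length : ℝ) * c - c := by
    rw [Delta2, hsum, hβ']
  have h4 : (0:ℝ) < 4 := by norm_num
  have hsplit : (4:ℝ) ^ (-(Delta2 α simpleBeta D d))
      = (8/3 : ℝ) ^ ((2:ℝ)/D - 1) * (3/2 : ℝ) ^ (((1:ℝ) - d.length)/2) := by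
    rw [hD2]
    have e1 : -(α - 2 * α / D + (d.length : ℝ) * c - c)
        = α * ((2:ℝ)/D - 1) + L * (((1:ℝ) - d.length)/2) := by
      rw [hc]; field_simp; ring
    rw [e1, Real.rpow_add h4, Real.rpow_mul h4.le, Real.rpow_mul h4.le,
      hα, hL, Real.rpow_logb h4 (by norm_num) (by norm_num),
      Real.rpow_logb h4 (by norm_num) (by norm_num)]
  rw [hsplit]
  have hpos : (0:ℝ) < (3/2 : ℝ) ^ (((1:ℝ) - d.length)/2) :=
    Real.rpow_pos_of_pos (by norm_num) _
  refine mul_le_mul_of_nonneg_right ?_ hpos.le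
  have h38 : (3/8 : ℝ) ^ ((1:ℝ)/2) = (8/3 : ℝ) ^ (-(1:ℝ)/2) := by
    rw [show (-(1:ℝ)/2) = -((1:ℝ)/2) by ring, Real.rpow_neg (by norm_num),
      ← Real.inv_rpow (by norm_num)]
    norm_num
  rw [h38]
  apply Real.rpow_le_rpow_left_iff (by norm_num : (1:ℝ) < 8/3) |>.mpr
  have hDpos : (0:ℝ) < D := by positivity
  have : (2:ℝ)/D ≤ 1/2 := by
    rw [div_le_div_iff₀ hDpos (by norm_num)]
    have : (4:ℝ) ≤ D := by exact_mod_cast hD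
    linarith
  linarith
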